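/- Suppose the linear system x' = A(t)x admits an algebraic dichotomy with projections P(s) and constants K > 0, α > 0 with respect to a growth rate μ, and f satisfies ‖f(t,x)‖ ≤ β μ'(t)/μ(t) and ‖f(t,x₁) − f(t,x₂)‖ ≤ γ (μ'(t)/μ(t)) ‖x₁ − x₂‖ with 6Kγα⁻¹ < 1. Let x(t) be any solution of x' = A(t)x + f(t,x). Then the system Z'(t) = A(t)Z(t) + f(t, x(t) + Z(t)) − f(t, x(t)) has Z ≡ 0 as its unique bounded solution on ℝ: every solution Z : ℝ → ℝⁿ with sup_{t∈ℝ} ‖Z(t)‖ < ∞ is identically zero. -/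

import Mathlib

open MeasureTheory Filter Set
set_option maxHeartbeats 1000000

/-- pointwise derivative of finite-dim operator family implies operator-norm derivative -/
lemma opHasDerivAt {n : ℕ} (T : ℝ → EuclideanSpace ℝ (Fin n) →L[ℝ] EuclideanSpace ℝ (Fin n))
    (D : EuclideanSpace ℝ (Fin n) →L[ℝ] EuclideanSpace ℝ (Fin n)) (t : ℝ)
    (h : ∀ x₀, HasDerivAt (fun r => T r x₀) (D x₀) t) : HasDerivAt T D t := by
  set E := EuclideanSpace ℝ (Fin n)
  let b := (EuclideanSpace.basisFun (Fin n) ℝ).toBasis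
  let ψ : (E →L[ℝ] E) →ₗ[ℝ] (Fin n → E) :=
    { toFun := fun L i => L (b i)
      map_add' := fun L M => by ext i; simp
      map_smul' := fun r L => by ext i; simp }
  have hinj : Function.Injective ψ := by
    intro L M hLM
    apply ContinuousLinearMap.coe_injective
    apply b.ext
    intro i
    exact congrFun hLM i
  have hsurj : Function.Surjective ψ := by
    intro v
    refine ⟨LinearMap.toContinuousLinearMap (b.constr ℝ v), funext fun i => ?_⟩
    simp [ψ, Module.Basis.constr_basis]
  let e : (E →L[ℝ] E) ≃L[ℝ] (Fin n → E) :=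
    (LinearEquiv.ofBijective ψ ⟨hinj, hsurj⟩).toContinuousLinearEquiv
  have he : ∀ L i, e L i = L (b i) := fun L i => rfl
  have h1 : HasDerivAt (fun r => e (T r)) (e D) t := by
    rw [hasDerivAt_pi]
    intro i
    simpa [he] using h (b i)
  have h2 : HasDerivAt (fun r => e.symm (e (T r))) (e.symm (e D)) t :=
    (e.symm : (Fin n → E) →L[ℝ] (E →L[ℝ] E)).hasFDerivAt.comp_hasDerivAt t h1
  simpa using h2

lemma invHasDerivAt {R : Type*} [NormedRing R] [NormedAlgebra ℝ R] [CompleteSpace R]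
    (U V : ℝ → R) (hunit : ∀ τ, U τ * V τ = 1 ∧ V τ * U τ = 1) {τ₀ : ℝ} {Du : R}
    (hU : HasDerivAt U Du τ₀) : HasDerivAt V (-(V τ₀ * Du * V τ₀)) τ₀ := by
  have hV : (Ring.inverse ∘ U) = V := funext fun τ =>
    (Ring.inverse_unit ⟨U τ, V τ, (hunit τ).1, (hunit τ).2⟩)
  have h1 := (hasFDerivAt_ringInverse (𝕜 := ℝ) (R := R)
      ⟨U τ₀, V τ₀, (hunit τ₀).1, (hunit τ₀).2⟩).comp_hasDerivAt τ₀ hU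
  rw [hV] at h1
  simpa using h1

theorem algebraic_dichotomy_zero_unique_bounded_solution {n : ℕ}
    (μ μ' : ℝ → ℝ)
    (hμ_pos : ∀ t, 0 < μ t)
    (hμ_mono : StrictMono μ)
    (hμ_zero : μ 0 = 1)
    (hμ_bot : Filter.Tendsto μ Filter.atBot (nhds 0))
    (hμ_top : Filter.Tendsto μ Filter.atTop Filter.atTop)
    (hμ_deriv : ∀ t, HasDerivAt μ (μ' t) t)
    (A : ℝ → EuclideanSpace ℝ (Fin n) →L[ℝ] EuclideanSpace ℝ (Fin n))
    (hA_cont : Continuous A)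
    (hA_bdd : ∃ C, ∀ t, ‖A t‖ ≤ C)
    (T : ℝ → ℝ → EuclideanSpace ℝ (Fin n) →L[ℝ] EuclideanSpace ℝ (Fin n))
    (hT_id : ∀ t, T t t = ContinuousLinearMap.id ℝ (EuclideanSpace ℝ (Fin n)))
    (hT_cocycle : ∀ t τ s, (T t τ).comp (T τ s) = T t s)
    (hT_sol : ∀ s x₀ t, HasDerivAt (fun r => T r s x₀) (A t (T t s x₀)) t)
    (P : ℝ → EuclideanSpace ℝ (Fin n) →L[ℝ] EuclideanSpace ℝ (Fin n))
    (hP_proj : ∀ s, (P s).comp (P s) = P s)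
    (K α : ℝ) (hK : 0 < K) (hα : 0 < α)
    (h_commute : ∀ t s, (T t s).comp (P s) = (P t).comp (T t s))
    (h_dichP : ∀ t s, s ≤ t → ‖(T t s).comp (P s)‖ ≤ K * (μ t / μ s) ^ (-α))
    (h_dichQ : ∀ t s, t ≤ s →
      ‖(T t s).comp (ContinuousLinearMap.id ℝ (EuclideanSpace ℝ (Fin n)) - P s)‖ ≤ K * (μ s / μ t) ^ (-α))
    (f : ℝ → EuclideanSpace ℝ (Fin n) → EuclideanSpace ℝ (Fin n))
    (β γ : ℝ)
    (hf_bdd : ∀ t x, ‖f t x‖ ≤ β * (μ' t / μ t))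
    (hf_lip : ∀ t x₁ x₂, ‖f t x₁ - f t x₂‖ ≤ γ * (μ' t / μ t) * ‖x₁ - x₂‖)
    (h_small : 6 * K * γ * α⁻¹ < 1)
    (x : ℝ → EuclideanSpace ℝ (Fin n))
    (hx_sol : ∀ t, HasDerivAt x (A t (x t) + f t (x t)) t) :
    ∀ Z : ℝ → EuclideanSpace ℝ (Fin n),
      (∀ t, HasDerivAt Z (A t (Z t) + f t (x t + Z t) - f t (x t)) t) →
      (∃ C, ∀ t, ‖Z t‖ ≤ C) →
      ∀ t, Z t = 0 := by
  intro Z hZ hZbdd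
  rcases Nat.eq_zero_or_pos n with hn0 | hn0
  · subst hn0; intro t; exact Subsingleton.elim _ _
  -- basic positivity facts
  have hμ'nn : ∀ τ, 0 ≤ μ' τ := by
    intro τ
    have hs : Tendsto (slope μ τ) (nhdsWithin τ {τ}ᶜ) (nhds (μ' τ)) :=
      hasDerivAt_iff_tendsto_slope.1 (hμ_deriv τ)
    refine ge_of_tendsto hs ?_
    filter_upwards [self_mem_nhdsWithin] with y hy
    rcases lt_or_gt_of_ne (hy : y ≠ τ) with h | h
    · have : μ y ≤ μ τ := (hμ_mono.le_iff_le).2 h.le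
      have : μ y - μ τ ≤ 0 := by linarith
      have hden : y - τ < 0 := by linarith
      rw [slope_def_field, div_nonneg_iff]
      right
      exact ⟨by linarith, hden.le⟩
    · have : μ τ ≤ μ y := (hμ_mono.le_iff_le).2 h.le
      have hden : 0 < y - τ := by linarith
      rw [slope_def_field]
      exact div_nonneg (by linarith) hden.le
  have hγnn : 0 ≤ γ := by
    obtain ⟨t₀, ht₀, hslope⟩ := exists_hasDerivAt_eq_slope μ μ' (by norm_num : (0:ℝ) < 1)
      (fun τ _ => (hμ_deriv τ).continuousAt.continuousWithinAt) (fun τ _ => hμ_deriv τ)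
    have hμ'pos : 0 < μ' t₀ := by
      rw [hslope]
      have := hμ_mono (show (0:ℝ) < 1 by norm_num)
      simp only [sub_zero, div_one]
      linarith
    set v : EuclideanSpace ℝ (Fin n) := EuclideanSpace.single ⟨0, hn0⟩ 1 with hv
    have hvn : ‖v‖ = 1 := by rw [hv, EuclideanSpace.norm_single]; norm_num
    have h := hf_lip t₀ v 0
    rw [sub_zero, hvn, mul_one] at h
    have h0 : 0 ≤ γ * (μ' t₀ / μ t₀) := le_trans (norm_nonneg _) h
    by_contra hneg
    push_neg at hneg
    have : γ * (μ' t₀ / μ t₀) < 0 :=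
      mul_neg_of_neg_of_pos hneg (div_pos hμ'pos (hμ_pos t₀))
    linarith
  -- the sup of ‖Z‖
  obtain ⟨C0, hC0⟩ := hZbdd
  set c := ⨆ t, ‖Z t‖ with hc
  have hbdd : BddAbove (Set.range fun t => ‖Z t‖) := ⟨C0, by rintro _ ⟨t, rfl⟩; exact hC0 t⟩
  have hcle : ∀ t, ‖Z t‖ ≤ c := fun t => le_ciSup hbdd t
  have hc0 : 0 ≤ c := le_trans (norm_nonneg _) (hcle 0)
  -- the inhomogeneity
  set g : ℝ → EuclideanSpace ℝ (Fin n) := fun τ => f τ (x τ + Z τ) - f τ (x τ) with hgdef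
  have hg_norm : ∀ τ, ‖g τ‖ ≤ γ * (μ' τ / μ τ) * c := by
    intro τ
    have h := hf_lip τ (x τ + Z τ) (x τ)
    rw [add_sub_cancel_left] at h
    refine le_trans h ?_
    have hnn : 0 ≤ γ * (μ' τ / μ τ) :=
      mul_nonneg hγnn (div_nonneg (hμ'nn τ) (hμ_pos τ).le)
    exact mul_le_mul_of_nonneg_left (hcle τ) hnn
  have hZ' : ∀ τ, HasDerivAt Z (A τ (Z τ) + g τ) τ := by
    intro τ
    have := hZ τ
    rwa [add_sub_assoc] at this
  -- cocycle consequences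
  have hTinv : ∀ a b (v : EuclideanSpace ℝ (Fin n)), T a b (T b a v) = v := by
    intro a b v
    have h := hT_cocycle a b a
    rw [hT_id] at h
    simpa using DFunLike.congr_fun h v
  have hmul : ∀ a b, (T a b) * (T b a) = 1 := by
    intro a b
    rw [ContinuousLinearMap.mul_def, hT_cocycle, hT_id, ContinuousLinearMap.one_def]
  -- operator derivatives
  have hU : ∀ s t, HasDerivAt (fun r => T r s) ((A t).comp (T t s)) t := by
    intro s t
    exact opHasDerivAt _ _ _ (fun x₀ => by simpa using hT_sol s x₀ t)
  have hS : ∀ s τ, HasDerivAt (fun r => T s r) (-((T s τ).comp (A τ))) τ := by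
    intro s τ
    have h := invHasDerivAt (fun r => T r s) (fun r => T s r)
      (fun r => ⟨hmul r s, hmul s r⟩) (hU s τ)
    have heq : -((T s τ).comp (A τ)) = -(T s τ * (A τ).comp (T τ s) * T s τ) := by
      ext v
      simp [ContinuousLinearMap.mul_apply, hTinv]
    rw [heq]
    exact h
  have hV : ∀ s τ, HasDerivAt (fun r => T s r (Z r)) (T s τ (g τ)) τ := by
    intro s τ
    have h := (hS s τ).clm_apply (hZ' τ)
    refine HasDerivAt.congr_deriv h ?_
    simp only [ContinuousLinearMap.neg_apply, ContinuousLinearMap.comp_apply, map_add]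
    abel
  have hScont : ∀ s, Continuous fun r : ℝ => T s r := by
    intro s
    have hdiff : Differentiable ℝ (fun r : ℝ => T s r) := fun τ => (hS s τ).differentiableAt
    exact hdiff.continuous
  -- integrability of the forcing
  have hμ'int : ∀ a b : ℝ, IntervalIntegrable μ' volume a b := by
    intro a b
    apply intervalIntegral.intervalIntegrable_deriv_of_nonneg
    · have hdiff : Differentiable ℝ μ := fun τ => (hμ_deriv τ).differentiableAt
      exact hdiff.continuous.continuousOn
    · exact fun τ _ => hμ_deriv τ
    · exact fun τ _ => hμ'nn τ
  have hVint : ∀ s a b : ℝ, IntervalIntegrable (fun τ => T s τ (g τ)) volume a b := by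
    intro s a b
    have hd : (fun τ => T s τ (g τ)) = deriv (fun r => T s r (Z r)) :=
      funext fun τ => ((hV s τ).deriv).symm
    obtain ⟨M, hM⟩ := (isCompact_uIcc (a := a) (b := b)).exists_bound_of_continuousOn
      (((hScont s)).continuousOn)
    set m := μ (min a b) with hm
    have hmpos : 0 < m := hμ_pos _
    have hMnn : 0 ≤ M := le_trans (norm_nonneg _) (hM a left_mem_uIcc)
    apply IntervalIntegrable.mono_fun' (g := fun τ => (M * (γ * c / m)) * μ' τ)
      ((hμ'int a b).const_mul _)
    · rw [hd]
      exact (measurable_deriv _).aestronglyMeasurable.restrict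
    · have : ∀ τ ∈ uIcc a b, ‖T s τ (g τ)‖ ≤ (M * (γ * c / m)) * μ' τ := by
        intro τ hτ
        have h1 : ‖T s τ (g τ)‖ ≤ M * ‖g τ‖ :=
          le_trans ((T s τ).le_opNorm (g τ))
            (mul_le_mul_of_nonneg_right (hM τ hτ) (norm_nonneg _))
        refine le_trans h1 ?_
        have hμm : m ≤ μ τ := hμ_mono.monotone (by
          rcases hτ with ⟨h1', h2'⟩
          simpa using h1')
        have h2 : ‖g τ‖ ≤ γ * c / m * μ' τ := by
          refine le_trans (hg_norm τ) ?_
          rw [show γ * (μ' τ / μ τ) * c = γ * c * μ' τ / μ τ from by ring,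
            show γ * c / m * μ' τ = γ * c * μ' τ / m from by ring,
            div_le_div_iff₀ (hμ_pos τ) hmpos]
          exact mul_le_mul_of_nonneg_left hμm (mul_nonneg (mul_nonneg hγnn hc0) (hμ'nn τ))
        calc M * ‖g τ‖ ≤ M * (γ * c / m * μ' τ) :=
              mul_le_mul_of_nonneg_left h2 hMnn
          _ = M * (γ * c / m) * μ' τ := by ring
      refine (ae_restrict_mem measurableSet_uIoc).mono fun τ hτ => ?_
      exact this τ ⟨hτ.1.le, hτ.2⟩
  -- variation of constants
  have hkey : ∀ s t : ℝ, Z t = T t s (Z s) + T t s (∫ τ in s..t, T s τ (g τ)) := by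
    intro s t
    have hVt := intervalIntegral.integral_eq_sub_of_hasDerivAt
      (f := fun r => T s r (Z r)) (f' := fun τ => T s τ (g τ)) (fun τ _ => hV s τ) (hVint s s t)
    have hVt' : (∫ τ in s..t, T s τ (g τ)) = T s t (Z t) - Z s := by
      simpa [hT_id] using hVt
    have hTst : T s t (Z t) = Z s + ∫ τ in s..t, T s τ (g τ) := by rw [hVt']; abel
    calc Z t = T t s (T s t (Z t)) := (hTinv t s (Z t)).symm
      _ = T t s (Z s + ∫ τ in s..t, T s τ (g τ)) := by rw [hTst]
      _ = T t s (Z s) + T t s (∫ τ in s..t, T s τ (g τ)) := map_add _ _ _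
  have hproj : ∀ (R : ℝ → EuclideanSpace ℝ (Fin n) →L[ℝ] EuclideanSpace ℝ (Fin n)),
      (∀ a b, (T a b).comp (R b) = (R a).comp (T a b)) →
      ∀ t s : ℝ, R t (Z t) = ((T t s).comp (R s)) (Z s)
        + ∫ τ in s..t, ((T t τ).comp (R τ)) (g τ) := by
    intro R hR t s
    have hcompR : ∀ τ, ((T t s).comp (R s)).comp (T s τ) = (T t τ).comp (R τ) := by
      intro τ
      rw [ContinuousLinearMap.comp_assoc, ← hR s τ, ← ContinuousLinearMap.comp_assoc,
        hT_cocycle]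
    have happ : ∀ v, R t (T t s v) = ((T t s).comp (R s)) v := by
      intro v
      have := DFunLike.congr_fun (hR t s) v
      simpa using this.symm
    calc R t (Z t) = R t (T t s (Z s) + T t s (∫ τ in s..t, T s τ (g τ))) := by
          rw [← hkey s t]
      _ = R t (T t s (Z s)) + R t (T t s (∫ τ in s..t, T s τ (g τ))) := map_add _ _ _
      _ = ((T t s).comp (R s)) (Z s) + ((T t s).comp (R s)) (∫ τ in s..t, T s τ (g τ)) := by
          rw [happ, happ]
      _ = ((T t s).comp (R s)) (Z s)
            + ∫ τ in s..t, ((T t s).comp (R s)) (T s τ (g τ)) := by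
          rw [ContinuousLinearMap.intervalIntegral_comp_comm _ (hVint s s t)]
      _ = ((T t s).comp (R s)) (Z s) + ∫ τ in s..t, ((T t τ).comp (R τ)) (g τ) := by
          congr 1
          apply intervalIntegral.integral_congr
          intro τ _
          have := DFunLike.congr_fun (hcompR τ) (g τ)
          simpa using this
  -- rpow helpers
  have hrw : ∀ a b : ℝ, 0 < a → 0 < b → (a / b) ^ (-α) = b ^ α * a ^ (-α) := by
    intro a b ha hb
    rw [Real.div_rpow ha.le hb.le, Real.rpow_neg hb.le, div_eq_mul_inv, inv_inv]
    ring
  -- FTC for the weight functions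
  have hF1 : ∀ τ, HasDerivAt (fun r => μ r ^ α / α) (μ' τ * μ τ ^ (α - 1)) τ := by
    intro τ
    have h := ((hμ_deriv τ).rpow_const (p := α) (Or.inl (hμ_pos τ).ne')).div_const α
    refine HasDerivAt.congr_deriv h ?_
    field_simp
  have hF2 : ∀ τ, HasDerivAt (fun r => -(μ r ^ (-α)) / α) (μ' τ * μ τ ^ (-α - 1)) τ := by
    intro τ
    have h := (((hμ_deriv τ).rpow_const (p := -α) (Or.inl (hμ_pos τ).ne')).neg).div_const α
    refine HasDerivAt.congr_deriv h ?_
    field_simp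
  have hF1nn : ∀ τ, 0 ≤ μ' τ * μ τ ^ (α - 1) := fun τ =>
    mul_nonneg (hμ'nn τ) (Real.rpow_nonneg (hμ_pos τ).le _)
  have hF2nn : ∀ τ, 0 ≤ μ' τ * μ τ ^ (-α - 1) := fun τ =>
    mul_nonneg (hμ'nn τ) (Real.rpow_nonneg (hμ_pos τ).le _)
  have hμα_int : ∀ a b : ℝ, IntervalIntegrable (fun τ => μ' τ * μ τ ^ (α - 1)) volume a b := by
    intro a b
    apply intervalIntegral.intervalIntegrable_deriv_of_nonneg
    · have hdiff : Differentiable ℝ (fun r => μ r ^ α / α) := fun τ => (hF1 τ).differentiableAt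
      exact hdiff.continuous.continuousOn
    · exact fun τ _ => hF1 τ
    · exact fun τ _ => hF1nn τ
  have hμβ_int : ∀ a b : ℝ, IntervalIntegrable (fun τ => μ' τ * μ τ ^ (-α - 1)) volume a b := by
    intro a b
    apply intervalIntegral.intervalIntegrable_deriv_of_nonneg
    · have hdiff : Differentiable ℝ (fun r => -(μ r ^ (-α)) / α) := fun τ => (hF2 τ).differentiableAt
      exact hdiff.continuous.continuousOn
    · exact fun τ _ => hF2 τ
    · exact fun τ _ => hF2nn τ
  have hFTC1 : ∀ a b : ℝ, (∫ τ in a..b, μ' τ * μ τ ^ (α - 1)) = μ b ^ α / α - μ a ^ α / α :=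
    fun a b => intervalIntegral.integral_eq_sub_of_hasDerivAt (fun τ _ => hF1 τ) (hμα_int a b)
  have hFTC2 : ∀ a b : ℝ,
      (∫ τ in a..b, μ' τ * μ τ ^ (-α - 1)) = -(μ b ^ (-α)) / α - -(μ a ^ (-α)) / α :=
    fun a b => intervalIntegral.integral_eq_sub_of_hasDerivAt (fun τ _ => hF2 τ) (hμβ_int a b)
  -- the P-integral bound
  have hIP : ∀ t s : ℝ, s ≤ t →
      ‖∫ τ in s..t, ((T t τ).comp (P τ)) (g τ)‖ ≤ K * γ * c / α := by
    intro t s hst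
    have hKγc : 0 ≤ K * γ * c := mul_nonneg (mul_nonneg hK.le hγnn) hc0
    have hbound : ∀ τ ∈ Set.uIoc s t, ‖((T t τ).comp (P τ)) (g τ)‖
        ≤ (K * γ * c * μ t ^ (-α)) * (μ' τ * μ τ ^ (α - 1)) := by
      intro τ hτ
      rw [uIoc_of_le hst] at hτ
      have hτt : τ ≤ t := hτ.2
      have h1 : ‖((T t τ).comp (P τ)) (g τ)‖ ≤ ‖(T t τ).comp (P τ)‖ * ‖g τ‖ :=
        ContinuousLinearMap.le_opNorm _ _
      have h2 : ‖(T t τ).comp (P τ)‖ * ‖g τ‖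
          ≤ (K * (μ t / μ τ) ^ (-α)) * (γ * (μ' τ / μ τ) * c) :=
        mul_le_mul (h_dichP t τ hτt) (hg_norm τ) (norm_nonneg _)
          (mul_nonneg hK.le (Real.rpow_nonneg (div_nonneg (hμ_pos _).le (hμ_pos _).le) _))
      refine le_trans h1 (le_trans h2 (le_of_eq ?_))
      rw [hrw _ _ (hμ_pos t) (hμ_pos τ), Real.rpow_sub_one (hμ_pos τ).ne']
      field_simp
    have hint : IntervalIntegrable
        (fun τ => (K * γ * c * μ t ^ (-α)) * (μ' τ * μ τ ^ (α - 1))) volume s t :=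
      (hμα_int s t).const_mul _
    have h3 := intervalIntegral.norm_integral_le_abs_of_norm_le
        ((ae_restrict_mem measurableSet_uIoc).mono hbound) hint
    have h4 : (∫ τ in s..t, (K * γ * c * μ t ^ (-α)) * (μ' τ * μ τ ^ (α - 1)))
        = (K * γ * c * μ t ^ (-α)) * (μ t ^ α / α - μ s ^ α / α) := by
      rw [intervalIntegral.integral_const_mul, hFTC1]
    have hμs : μ s ^ α ≤ μ t ^ α :=
      Real.rpow_le_rpow (hμ_pos s).le (hμ_mono.monotone hst) hα.le
    have hone : μ t ^ (-α) * μ t ^ α = 1 := by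
      rw [← Real.rpow_add (hμ_pos t)]
      simp
    have hx : (0:ℝ) ≤ μ t ^ (-α) := Real.rpow_nonneg (hμ_pos t).le _
    have hsα : (0:ℝ) ≤ μ s ^ α := Real.rpow_nonneg (hμ_pos s).le _
    have key : μ t ^ (-α) * (μ t ^ α - μ s ^ α) ≤ 1 := by
      calc μ t ^ (-α) * (μ t ^ α - μ s ^ α) ≤ μ t ^ (-α) * μ t ^ α :=
            mul_le_mul_of_nonneg_left (by linarith) hx
        _ = 1 := hone
    have h5 : (K * γ * c * μ t ^ (-α)) * (μ t ^ α / α - μ s ^ α / α) ≤ K * γ * c / α := by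
      have hmul2 := mul_le_mul_of_nonneg_left key hKγc
      calc (K * γ * c * μ t ^ (-α)) * (μ t ^ α / α - μ s ^ α / α)
          = (K * γ * c * (μ t ^ (-α) * (μ t ^ α - μ s ^ α))) * α⁻¹ := by ring
        _ ≤ (K * γ * c * 1) * α⁻¹ := mul_le_mul_of_nonneg_right hmul2 (inv_nonneg.2 hα.le)
        _ = K * γ * c / α := by ring
    have h6 : 0 ≤ (K * γ * c * μ t ^ (-α)) * (μ t ^ α / α - μ s ^ α / α) := by
      apply mul_nonneg (mul_nonneg hKγc hx)
      have := mul_le_mul_of_nonneg_right hμs (inv_nonneg.2 hα.le)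
      rw [div_eq_mul_inv, div_eq_mul_inv]
      linarith
    calc ‖∫ τ in s..t, ((T t τ).comp (P τ)) (g τ)‖
        ≤ |∫ τ in s..t, (K * γ * c * μ t ^ (-α)) * (μ' τ * μ τ ^ (α - 1))| := h3
      _ = (K * γ * c * μ t ^ (-α)) * (μ t ^ α / α - μ s ^ α / α) := by
          rw [h4, abs_of_nonneg h6]
      _ ≤ K * γ * c / α := h5
  -- the projection Q
  set Q : ℝ → EuclideanSpace ℝ (Fin n) →L[ℝ] EuclideanSpace ℝ (Fin n) :=
    fun r => ContinuousLinearMap.id ℝ (EuclideanSpace ℝ (Fin n)) - P r with hQdef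
  have hQcomm : ∀ a b, (T a b).comp (Q b) = (Q a).comp (T a b) := by
    intro a b
    simp only [hQdef, ContinuousLinearMap.comp_sub, ContinuousLinearMap.sub_comp,
      ContinuousLinearMap.comp_id, ContinuousLinearMap.id_comp, h_commute a b]
  -- the Q-integral bound
  have hIQ : ∀ t s : ℝ, t ≤ s →
      ‖∫ τ in s..t, ((T t τ).comp (Q τ)) (g τ)‖ ≤ K * γ * c / α := by
    intro t s hts
    have hKγc : 0 ≤ K * γ * c := mul_nonneg (mul_nonneg hK.le hγnn) hc0
    rw [intervalIntegral.integral_symm t s, norm_neg]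
    have hbound : ∀ τ ∈ Set.uIoc t s, ‖((T t τ).comp (Q τ)) (g τ)‖
        ≤ (K * γ * c * μ t ^ α) * (μ' τ * μ τ ^ (-α - 1)) := by
      intro τ hτ
      rw [uIoc_of_le hts] at hτ
      have hτt : t ≤ τ := hτ.1.le
      have h1 : ‖((T t τ).comp (Q τ)) (g τ)‖ ≤ ‖(T t τ).comp (Q τ)‖ * ‖g τ‖ :=
        ContinuousLinearMap.le_opNorm _ _
      have h2 : ‖(T t τ).comp (Q τ)‖ * ‖g τ‖
          ≤ (K * (μ τ / μ t) ^ (-α)) * (γ * (μ' τ / μ τ) * c) :=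
        mul_le_mul (h_dichQ t τ hτt) (hg_norm τ) (norm_nonneg _)
          (mul_nonneg hK.le (Real.rpow_nonneg (div_nonneg (hμ_pos _).le (hμ_pos _).le) _))
      refine le_trans h1 (le_trans h2 (le_of_eq ?_))
      rw [hrw _ _ (hμ_pos τ) (hμ_pos t), show (-α - 1 : ℝ) = -α - 1 from rfl,
        Real.rpow_sub_one (hμ_pos τ).ne' (-α)]
      field_simp
    have hint : IntervalIntegrable
        (fun τ => (K * γ * c * μ t ^ α) * (μ' τ * μ τ ^ (-α - 1))) volume t s :=
      (hμβ_int t s).const_mul _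
    have h3 := intervalIntegral.norm_integral_le_abs_of_norm_le
        ((ae_restrict_mem measurableSet_uIoc).mono hbound) hint
    have h4 : (∫ τ in t..s, (K * γ * c * μ t ^ α) * (μ' τ * μ τ ^ (-α - 1)))
        = (K * γ * c * μ t ^ α) * (-(μ s ^ (-α)) / α - -(μ t ^ (-α)) / α) := by
      rw [intervalIntegral.integral_const_mul, hFTC2]
    have hμs : μ s ^ (-α) ≤ μ t ^ (-α) :=
      Real.rpow_le_rpow_of_nonpos (hμ_pos t) (hμ_mono.monotone hts) (neg_nonpos.2 hα.le)
    have hone : μ t ^ α * μ t ^ (-α) = 1 := by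
      rw [← Real.rpow_add (hμ_pos t)]
      simp
    have hx : (0:ℝ) ≤ μ t ^ α := Real.rpow_nonneg (hμ_pos t).le _
    have hsα : (0:ℝ) ≤ μ s ^ (-α) := Real.rpow_nonneg (hμ_pos s).le _
    have key : μ t ^ α * (μ t ^ (-α) - μ s ^ (-α)) ≤ 1 := by
      calc μ t ^ α * (μ t ^ (-α) - μ s ^ (-α)) ≤ μ t ^ α * μ t ^ (-α) :=
            mul_le_mul_of_nonneg_left (by linarith) hx
        _ = 1 := hone
    have h5 : (K * γ * c * μ t ^ α) * (-(μ s ^ (-α)) / α - -(μ t ^ (-α)) / α)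
        ≤ K * γ * c / α := by
      have hmul2 := mul_le_mul_of_nonneg_left key hKγc
      calc (K * γ * c * μ t ^ α) * (-(μ s ^ (-α)) / α - -(μ t ^ (-α)) / α)
          = (K * γ * c * (μ t ^ α * (μ t ^ (-α) - μ s ^ (-α)))) * α⁻¹ := by ring
        _ ≤ (K * γ * c * 1) * α⁻¹ := mul_le_mul_of_nonneg_right hmul2 (inv_nonneg.2 hα.le)
        _ = K * γ * c / α := by ring
    have h6 : 0 ≤ (K * γ * c * μ t ^ α) * (-(μ s ^ (-α)) / α - -(μ t ^ (-α)) / α) := by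
      apply mul_nonneg (mul_nonneg hKγc hx)
      have := mul_le_mul_of_nonneg_right hμs (inv_nonneg.2 hα.le)
      rw [div_eq_mul_inv, div_eq_mul_inv]
      linarith
    calc ‖∫ τ in t..s, ((T t τ).comp (Q τ)) (g τ)‖
        ≤ |∫ τ in t..s, (K * γ * c * μ t ^ α) * (μ' τ * μ τ ^ (-α - 1))| := h3
      _ = (K * γ * c * μ t ^ α) * (-(μ s ^ (-α)) / α - -(μ t ^ (-α)) / α) := by
          rw [h4, abs_of_nonneg h6]
      _ ≤ K * γ * c / α := h5
  -- bound on the P-part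
  have hPB : ∀ t, ‖P t (Z t)‖ ≤ K * γ * c / α := by
    intro t
    have key : ∀ s, s ≤ t → ‖P t (Z t)‖ ≤ K * c * (μ s / μ t) ^ α + K * γ * c / α := by
      intro s hst
      rw [hproj P h_commute t s]
      have hbd1 : ‖((T t s).comp (P s)) (Z s)‖ ≤ (K * (μ t / μ s) ^ (-α)) * c :=
        le_trans (ContinuousLinearMap.le_opNorm _ _)
          (mul_le_mul (h_dichP t s hst) (hcle s) (norm_nonneg _)
            (mul_nonneg hK.le (Real.rpow_nonneg (div_nonneg (hμ_pos _).le (hμ_pos _).le) _)))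
      have heq : (K * (μ t / μ s) ^ (-α)) * c = K * c * ((μ s) ^ α * (μ t) ^ (-α)) := by
        rw [hrw _ _ (hμ_pos t) (hμ_pos s)]
        ring
      have heq2 : K * c * (μ s / μ t) ^ α = K * c * ((μ s) ^ α * (μ t) ^ (-α)) := by
        rw [Real.div_rpow (hμ_pos s).le (hμ_pos t).le, Real.rpow_neg (hμ_pos t).le,
          div_eq_mul_inv]
      calc ‖((T t s).comp (P s)) (Z s) + ∫ τ in s..t, ((T t τ).comp (P τ)) (g τ)‖
          ≤ ‖((T t s).comp (P s)) (Z s)‖ + ‖∫ τ in s..t, ((T t τ).comp (P τ)) (g τ)‖ :=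
            norm_add_le _ _
        _ ≤ (K * (μ t / μ s) ^ (-α)) * c + K * γ * c / α := add_le_add hbd1 (hIP t s hst)
        _ = K * c * (μ s / μ t) ^ α + K * γ * c / α := by rw [heq, ← heq2]
    have hlim : Tendsto (fun s => K * c * (μ s / μ t) ^ α + K * γ * c / α) atBot
        (nhds (K * γ * c / α)) := by
      have h1 : Tendsto (fun s => μ s / μ t) atBot (nhds 0) := by
        have := hμ_bot.div_const (μ t)
        simpa using this
      have hc2 : ContinuousAt (fun y : ℝ => y ^ α) 0 :=
        Real.continuousAt_rpow_const 0 α (Or.inr hα.le)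
      have h2 : Tendsto (fun s => (μ s / μ t) ^ α) atBot (nhds 0) := by
        have := hc2.tendsto.comp h1
        simpa [Function.comp_def, Real.zero_rpow hα.ne'] using this
      have h3 := (h2.const_mul (K * c)).add_const (K * γ * c / α)
      simpa using h3
    exact ge_of_tendsto hlim (eventually_atBot.2 ⟨t, fun s hs => key s hs⟩)
  -- bound on the Q-part
  have hQB : ∀ t, ‖Q t (Z t)‖ ≤ K * γ * c / α := by
    intro t
    have key : ∀ s, t ≤ s → ‖Q t (Z t)‖ ≤ K * c * (μ t / μ s) ^ α + K * γ * c / α := by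
      intro s hts
      rw [hproj Q hQcomm t s]
      have hbd1 : ‖((T t s).comp (Q s)) (Z s)‖ ≤ (K * (μ s / μ t) ^ (-α)) * c :=
        le_trans (ContinuousLinearMap.le_opNorm _ _)
          (mul_le_mul (h_dichQ t s hts) (hcle s) (norm_nonneg _)
            (mul_nonneg hK.le (Real.rpow_nonneg (div_nonneg (hμ_pos _).le (hμ_pos _).le) _)))
      have heq : (K * (μ s / μ t) ^ (-α)) * c = K * c * ((μ t) ^ α * (μ s) ^ (-α)) := by
        rw [hrw _ _ (hμ_pos s) (hμ_pos t)]
        ring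
      have heq2 : K * c * (μ t / μ s) ^ α = K * c * ((μ t) ^ α * (μ s) ^ (-α)) := by
        rw [Real.div_rpow (hμ_pos t).le (hμ_pos s).le, Real.rpow_neg (hμ_pos s).le,
          div_eq_mul_inv]
      calc ‖((T t s).comp (Q s)) (Z s) + ∫ τ in s..t, ((T t τ).comp (Q τ)) (g τ)‖
          ≤ ‖((T t s).comp (Q s)) (Z s)‖ + ‖∫ τ in s..t, ((T t τ).comp (Q τ)) (g τ)‖ :=
            norm_add_le _ _
        _ ≤ (K * (μ s / μ t) ^ (-α)) * c + K * γ * c / α := add_le_add hbd1 (hIQ t s hts)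
        _ = K * c * (μ t / μ s) ^ α + K * γ * c / α := by rw [heq, ← heq2]
    have hlim : Tendsto (fun s => K * c * (μ t / μ s) ^ α + K * γ * c / α) atTop
        (nhds (K * γ * c / α)) := by
      have h1 : Tendsto (fun s => μ t / μ s) atTop (nhds 0) :=
        Tendsto.div_atTop tendsto_const_nhds hμ_top
      have hc2 : ContinuousAt (fun y : ℝ => y ^ α) 0 :=
        Real.continuousAt_rpow_const 0 α (Or.inr hα.le)
      have h2 : Tendsto (fun s => (μ t / μ s) ^ α) atTop (nhds 0) := by
        have := hc2.tendsto.comp h1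
        simpa [Function.comp_def, Real.zero_rpow hα.ne'] using this
      have h3 := (h2.const_mul (K * c)).add_const (K * γ * c / α)
      simpa using h3
    exact ge_of_tendsto hlim (eventually_atTop.2 ⟨t, fun s hs => key s hs⟩)
  -- conclusion
  have hZb : ∀ t, ‖Z t‖ ≤ (2 * K * γ * α⁻¹) * c := by
    intro t
    have h0 : P t (Z t) + Q t (Z t) = Z t := by
      simp [hQdef]
    calc ‖Z t‖ = ‖P t (Z t) + Q t (Z t)‖ := by rw [h0]
      _ ≤ ‖P t (Z t)‖ + ‖Q t (Z t)‖ := norm_add_le _ _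
      _ ≤ K * γ * c / α + K * γ * c / α := add_le_add (hPB t) (hQB t)
      _ = (2 * K * γ * α⁻¹) * c := by ring
  have hcθ : c ≤ (2 * K * γ * α⁻¹) * c := by
    refine ciSup_le fun t => hZb t
  have hθ : 2 * K * γ * α⁻¹ < 1 := by
    have h1 : 0 ≤ K * γ * α⁻¹ := mul_nonneg (mul_nonneg hK.le hγnn) (inv_nonneg.2 hα.le)
    nlinarith
  have hc_zero : c ≤ 0 := by nlinarith
  intro t
  have : ‖Z t‖ ≤ 0 := le_trans (hcle t) hc_zero
  exact norm_le_zero_iff.1 this
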